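/- Let n ≥ 2, let r ≡ 2 (mod 4), r ≥ 2, let π ∈ A_{r,n} and π₀ = s(p(π)). Then ℓ_𝒜(π₀) = ℓ_G(p(π)), where ℓ_𝒜 is word length in A_{r,n} with respect to 𝒜 and ℓ_G is word length in G_{r/2,n} with respect to its Coxeter-like generators {s_0, s_1, …, s_{n−1}}. -/

import Mathlib

open Multiplicative

namespace ACP

/-- The action of `Sₙ` on color vectors by permuting coordinates. -/
def permAct (r n : ℕ) : Equiv.Perm (Fin n) →* MulAut (Fin n → Multiplicative (ZMod r)) where
  toFun τ :=
    { toFun := fun z => z ∘ τ.symm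
      invFun := fun z => z ∘ τ
      left_inv := fun z => by ext i; simp
      right_inv := fun z => by ext i; simp
      map_mul' := fun z w => rfl }
  map_one' := by ext z i; rfl
  map_mul' a b := by ext z i; rfl

/-- The group of colored permutations `G_{r,n} = ℤ_r ≀ Sₙ`. -/
abbrev G (r n : ℕ) : Type := (Fin n → Multiplicative (ZMod r)) ⋊[permAct r n] Equiv.Perm (Fin n)

/-- The Coxeter-like generators: `gen r n 0 = s₀` colors the digit 1 by one color,
`gen r n i = sᵢ` (for `1 ≤ i ≤ n-1`) is the adjacent transposition `(i, i+1)`. -/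
def gen (r n : ℕ) (i : ℕ) : G r n :=
  if h : 0 < i ∧ i < n then
    ⟨1, Equiv.swap ⟨i - 1, by omega⟩ ⟨i, h.2⟩⟩
  else
    ⟨fun j => if (j : ℕ) = 0 then ofAdd (1 : ZMod r) else 1, 1⟩

def zmod2ToUnits : Multiplicative (ZMod 2) →* ℤˣ where
  toFun z := (-1) ^ (toAdd z).val
  map_one' := rfl
  map_mul' := by decide

def csumHom (r n : ℕ) (hr : 2 ∣ r) :
    (Fin n → Multiplicative (ZMod r)) →* Multiplicative (ZMod 2) where
  toFun z := ofAdd (∑ i, ZMod.castHom hr (ZMod 2) (toAdd (z i)))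
  map_one' := by simp
  map_mul' z w := by
    have h : ∀ i, ZMod.castHom hr (ZMod 2) (toAdd ((z * w) i))
        = ZMod.castHom hr (ZMod 2) (toAdd (z i)) + ZMod.castHom hr (ZMod 2) (toAdd (w i)) :=
      fun i => map_add _ _ _
    simp only [h, Finset.sum_add_distrib, ofAdd_add]

/-- The sign character of `G_{r,n}` (for even `r`): sends every Coxeter-like
generator `sᵢ` to `-1`. -/
noncomputable def sgn (r n : ℕ) (hr : 2 ∣ r) : G r n →* ℤˣ :=
  SemidirectProduct.lift (zmod2ToUnits.comp (csumHom r n hr)) Equiv.Perm.sign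
    (by
      intro g
      refine MonoidHom.ext fun z => ?_
      have h1 : ∀ a x : ℤˣ, a * x * a⁻¹ = x := fun a x => by
        rw [mul_comm a x, mul_inv_cancel_right]
      simp only [MonoidHom.comp_apply, MulEquiv.coe_toMonoidHom, MulAut.conj_apply, h1]
      congr 1
      show csumHom r n hr (z ∘ g.symm) = csumHom r n hr z
      unfold csumHom
      simp only [MonoidHom.coe_mk, OneHom.coe_mk]
      congr 1
      exact Equiv.sum_comp g.symm fun j => ZMod.castHom hr (ZMod 2) (toAdd (z j)))

/-- The group of alternating colored permutations `A_{r,n}`: the kernel of the sign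
character of `G_{r,n}`. -/
noncomputable def Arn (r n : ℕ) (hr : 2 ∣ r) : Subgroup (G r n) := (sgn r n hr).ker

/-- The generators of `A_{r,n}`: `agen r n 0 = a₀ = s₀²` and
`agen r n i = aᵢ = s₀^{r/2} sᵢ` for `i ≥ 1`. -/
def agen (r n : ℕ) (i : ℕ) : G r n :=
  if i = 0 then gen r n 0 ^ 2 else gen r n 0 ^ (r / 2) * gen r n i

/-- The generating set `𝒜 = {a₀, a₁, a₁⁻¹, a₂, …, a_{n-1}}` of `A_{r,n}`. -/
def Aset (r n : ℕ) : Set (G r n) :=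
  {x | ∃ i ≤ n - 1, x = agen r n i} ∪ {(agen r n 1)⁻¹}

/-- The Coxeter-like generating set `{s₀, …, s_{n-1}}` of `G_{r,n}`. -/
def Sset (r n : ℕ) : Set (G r n) := {x | ∃ i < n, x = gen r n i}

/-- Word length of `g` with respect to a generating set `B`. -/
noncomputable def wordLength {H : Type*} [Group H] (B : Set H) (g : H) : ℕ :=
  sInf {k | ∃ w : List H, (∀ x ∈ w, x ∈ B) ∧ w.prod = g ∧ w.length = k}

/-- The element `a₁² ∈ A_{r,n}`. -/
noncomputable def a1sq (r n : ℕ) (hr : 2 ∣ r) : ↥(Arn r n hr) :=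
  ⟨agen r n 1 ^ 2, by rw [Arn, MonoidHom.mem_ker, map_pow]; exact Int.units_sq _⟩

/-- The operator `a ⊘ 2` : the residue mod `r/2` of `a/2` (`a` even) or of
`(a + r/2)/2` (`a` odd). -/
def oslash (r a : ℕ) : ℕ :=
  if a % 2 = 0 then (a / 2) % (r / 2) else ((a + r / 2) / 2) % (r / 2)

/-- `z_i(π)`, the color of digit `i+1` of `π`, as a natural number in `{0, …, r-1}`. -/
def zval (r n : ℕ) (π : G r n) (i : Fin n) : ℕ := (toAdd (π.left i)).val

/-- `csum(π) = Σ z_i(π)`. -/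
def csum (r n : ℕ) (π : G r n) : ℕ := ∑ i, zval r n π i

/-- Rank of the colored letter `b^{[c]}` (with `1 ≤ b ≤ n`, `0 ≤ c ≤ r-1`) in the
length order `n^{[r-1]} < ⋯ < 1^{[1]} < 1 < 2 < ⋯ < n`. -/
def rank (r n : ℕ) (b c : ℕ) : ℕ :=
  if c = 0 then n * (r - 1) + (b - 1) else (n - b) * (r - 1) + (r - 1 - c)

/-- Rank (in the length order) of the letter in position `i` of the window of `π`. -/
def colRank (r n : ℕ) (π : G r n) (i : Fin n) : ℕ :=
  rank r n ((π.right i : ℕ) + 1) (zval r n π (π.right i))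

/-- The inversion number of `π ∈ G_{r,n}` with respect to the length order. -/
noncomputable def inv (r n : ℕ) (π : G r n) : ℕ :=
  Nat.card {p : Fin n × Fin n // p.1 < p.2 ∧ colRank r n π p.2 < colRank r n π p.1}

/-- The ordinary inversion number of a permutation. -/
noncomputable def invPerm (n : ℕ) (τ : Equiv.Perm (Fin n)) : ℕ :=
  Nat.card {p : Fin n × Fin n // p.1 < p.2 ∧ τ p.2 < τ p.1}

/-- The covering map `p : A_{r,n} → G_{r/2,n}`, `p(z, τ) = ((zᵢ ⊘ 2)ᵢ, τ)`. -/
def pmap (r n : ℕ) (π : G r n) : G (r / 2) n :=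
  ⟨fun i => ofAdd ((oslash r (zval r n π i) : ZMod (r / 2))), π.right⟩

/-- The section `s : G_{r/2,n} → A_{r,n}`: doubles all colors (mod `r`), adding `r/2`
to the color of the digit `1` when `inv(|π|)` is odd. -/
noncomputable def smap (r n : ℕ) (π : G (r / 2) n) : G r n :=
  ⟨fun d => ofAdd
      (((2 * zval (r / 2) n π d +
        if (d : ℕ) = 0 ∧ invPerm n π.right % 2 = 1 then r / 2 else 0 : ℕ) : ZMod r)),
   π.right⟩

/-- `c(π) = Σ_{i : z_i(π) ≠ 0} (i - 1)` (digits are `1`-based). -/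
def cstat (r n : ℕ) (π : G r n) : ℕ :=
  ∑ i : Fin n, if zval r n π i ≠ 0 then (i : ℕ) else 0

/-- The number of absolute transparent inversions of `π`. -/
noncomputable def tinv (r n : ℕ) (π : G r n) : ℕ :=
  Nat.card {p : Fin n × Fin n //
    zval r n π p.1 = r / 2 ∧ p.2 < p.1 ∧ π.right⁻¹ p.1 < π.right⁻¹ p.2}

/-- The (digit-indexed) Lehmer code `l_i = #{j : j > i, τ⁻¹(i) > τ⁻¹(j)}`. -/
noncomputable def lehmer (n : ℕ) (τ : Equiv.Perm (Fin n)) (i : Fin n) : ℕ :=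
  Nat.card {j : Fin n // i < j ∧ τ⁻¹ j < τ⁻¹ i}


/-- `μ(π)`: the minimum of `β(ω) + n(ω)` over all factorizations
`ω = b₀ s₀^{i₁} b₁ ⋯ s₀^{i_{k+1}} b_{k+1}` of `π`, where each `b_u` is a word in
`s₁, …, s_{n-1}` only, `n(ω)` is the number of letters `sᵢ` with `i ≠ 0`, and
`β(ω) = Σ_u (i_u ⊘ 2)`. -/
noncomputable def mu (r n : ℕ) (π : G r n) : ℕ :=
  sInf {m | ∃ (b₀ : List ℕ) (L : List (ℕ × List ℕ)),
    (∀ x ∈ b₀, 1 ≤ x ∧ x ≤ n - 1) ∧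
    (∀ q ∈ L, ∀ x ∈ q.2, 1 ≤ x ∧ x ≤ n - 1) ∧
    π = (b₀.map (gen r n)).prod *
        (L.map (fun q => gen r n 0 ^ q.1 * (q.2.map (gen r n)).prod)).prod ∧
    m = (L.map (fun q => oslash r q.1)).sum +
        (b₀.length + (L.map (fun q => q.2.length)).sum)}

/-- The flag-inversion number on `A_{r,n}`:
`finv_A(π) = (r/2)·inv(|π|) + Σᵢ (cᵢ(π) ⊘ 2)` where `cᵢ(π) = r - zᵢ(π⁻¹) (mod r)`. -/
noncomputable def finvA (r n : ℕ) (π : G r n) : ℕ :=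
  (r / 2) * invPerm n π.right + ∑ i, oslash r ((r - zval r n π⁻¹ i) % r)

/-- The number of (colored) right-to-left minima of `π` whose color is not in `{0, r/2}`. -/
noncomputable def rtlMinA (r n : ℕ) (π : G r n) : ℕ :=
  Nat.card {i : Fin n // (∀ j : Fin n, i < j → π.right i < π.right j) ∧
    zval r n π (π.right i) ≠ 0 ∧ zval r n π (π.right i) ≠ r / 2}

/-- The defining relators of the Coxeter-like presentation of `A_{r,n}` on generators
`x₀, …, x_{n-1}`. -/
def rels (r n : ℕ) : Set (FreeGroup (Fin n)) :=
  {w | ∃ i : Fin n, (i : ℕ) = 0 ∧ w = FreeGroup.of i ^ (r / 2)} ∪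
  {w | ∃ i : Fin n, (i : ℕ) = 1 ∧ w = FreeGroup.of i ^ 4} ∪
  {w | ∃ i : Fin n, 2 ≤ (i : ℕ) ∧ w = FreeGroup.of i ^ 2} ∪
  {w | ∃ i j : Fin n, (i : ℕ) ≠ 1 ∧ (j : ℕ) ≠ 1 ∧ (i : ℕ) + 1 < (j : ℕ) ∧
    w = FreeGroup.of i * FreeGroup.of j * (FreeGroup.of i)⁻¹ * (FreeGroup.of j)⁻¹} ∪
  {w | ∃ i j : Fin n, 1 ≤ (i : ℕ) ∧ (j : ℕ) = (i : ℕ) + 1 ∧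
    w = (FreeGroup.of i * FreeGroup.of j) ^ 3} ∪
  {w | ∃ i j : Fin n, (i : ℕ) = 0 ∧ (j : ℕ) = 1 ∧
    w = (FreeGroup.of i * FreeGroup.of j) ^ (2 * r)} ∪
  {w | ∃ i j : Fin n, (i : ℕ) = 0 ∧ (j : ℕ) = 1 ∧
    w = (FreeGroup.of i * (FreeGroup.of j)⁻¹) ^ (2 * r)} ∪
  {w | ∃ i j : Fin n, (i : ℕ) = 0 ∧ (j : ℕ) = 1 ∧
    w = FreeGroup.of i * FreeGroup.of j ^ 2 * (FreeGroup.of i)⁻¹ * (FreeGroup.of j ^ 2)⁻¹} ∪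
  {w | ∃ i j : Fin n, (i : ℕ) = 1 ∧ 2 < (j : ℕ) ∧
    w = FreeGroup.of i * FreeGroup.of j * FreeGroup.of i * (FreeGroup.of j)⁻¹}

end ACP

namespace ACP


theorem oslash_eq (r a : ℕ) : oslash r a = ((a + (r / 2) * (a % 2)) / 2) % (r / 2) := by
  unfold oslash
  rcases Nat.even_or_odd a with h | h
  · rw [Nat.even_iff] at h; simp [h]
  · rw [Nat.odd_iff] at h; rw [if_neg (by omega)]
    rw [h, mul_one]

theorem two_mul_oslash {r : ℕ} (hr : r % 4 = 2) (a : ℕ) : 2 * oslash r a ≡ a [MOD r / 2] := by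
  rw [oslash_eq]
  set d := r / 2 with hd
  set m := a + d * (a % 2) with hm
  have hme : 2 * (m / 2) = m := by
    have h2 : d % 2 = 1 := by omega
    rcases Nat.even_or_odd a with h | h
    · rw [Nat.even_iff] at h
      rw [hm, h, Nat.mul_zero, Nat.add_zero]
      omega
    · rw [Nat.odd_iff] at h
      rw [hm, h, Nat.mul_one]
      omega
  calc 2 * (m / 2 % d) ≡ 2 * (m / 2) [MOD d] :=
        ((Nat.mod_modEq (m / 2) d).mul_left' 2).of_mul_left 2
    _ = m := hme
    _ ≡ a [MOD d] := Nat.add_mul_mod_self_left a d (a % 2)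

theorem coprime_d {r : ℕ} (hr : r % 4 = 2) : Nat.gcd (r / 2) 2 = 1 :=
  Nat.Coprime.symm ((Nat.Prime.coprime_iff_not_dvd Nat.prime_two).mpr (by omega))

theorem oslash_add {r : ℕ} (hr : r % 4 = 2) (x y : ℕ) :
    oslash r (x + y) ≡ oslash r x + oslash r y [MOD r / 2] := by
  apply Nat.ModEq.cancel_left_of_coprime (coprime_d hr)
  calc 2 * oslash r (x + y) ≡ x + y [MOD r / 2] := two_mul_oslash hr _
    _ ≡ 2 * oslash r x + 2 * oslash r y [MOD r / 2] :=
        ((two_mul_oslash hr x).symm.add (two_mul_oslash hr y).symm)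
    _ = 2 * (oslash r x + oslash r y) := by ring

theorem oslash_mod {r : ℕ} (hr : r % 4 = 2) (a : ℕ) :
    oslash r (a % r) ≡ oslash r a [MOD r / 2] := by
  apply Nat.ModEq.cancel_left_of_coprime (coprime_d hr)
  calc 2 * oslash r (a % r) ≡ a % r [MOD r / 2] := two_mul_oslash hr _
    _ ≡ a [MOD r / 2] := by
        have h : a % r ≡ a [MOD 2 * (r / 2)] := by
          rw [show 2 * (r / 2) = r by omega]; exact Nat.mod_modEq a r
        exact h.of_mul_left 2
    _ ≡ 2 * oslash r a [MOD r / 2] := (two_mul_oslash hr a).symm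

theorem zmod_oslash_add {r : ℕ} (hr : r % 4 = 2) (x y : ℕ) :
    ((oslash r ((x + y) % r) : ℕ) : ZMod (r / 2)) = (oslash r x : ZMod (r / 2)) + oslash r y := by
  rw [← Nat.cast_add, ZMod.natCast_eq_natCast_iff]
  exact (oslash_mod hr _).trans (oslash_add hr x y)



theorem invPerm_one (n : ℕ) : invPerm n 1 = 0 := by
  have : IsEmpty {p : Fin n × Fin n // p.1 < p.2 ∧ (1 : Equiv.Perm (Fin n)) p.2 < (1 : Equiv.Perm (Fin n)) p.1} := by
    refine ⟨fun x => ?_⟩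
    obtain ⟨p, h1, h2⟩ := x
    simp only [Equiv.Perm.one_apply] at h2
    exact absurd h1 h2.asymm
  exact Nat.card_of_isEmpty

noncomputable def sgnc (n : ℕ) (τ : Equiv.Perm (Fin n)) : ℤˣ :=
  ∏ p : Fin n × Fin n, if p.1 < p.2 ∧ τ p.2 < τ p.1 then -1 else 1

theorem neg_one_pow_invPerm (n : ℕ) (τ : Equiv.Perm (Fin n)) :
    ((-1 : ℤˣ)) ^ (invPerm n τ) = sgnc n τ := by
  unfold invPerm sgnc
  rw [Nat.card_eq_fintype_card, Fintype.card_subtype, Finset.prod_ite, Finset.prod_const,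
    Finset.prod_const_one, mul_one]

theorem swap_lt_iff {n : ℕ} (a b x y : Fin n) (hab : (a : ℕ) + 1 = b) (hxy : x ≠ y)
    (h1 : ¬(x = a ∧ y = b)) (h2 : ¬(x = b ∧ y = a)) :
    (Equiv.swap a b x < Equiv.swap a b y ↔ x < y) := by
  simp only [Equiv.swap_apply_def]
  split_ifs <;> simp only [Fin.ext_iff, Fin.lt_def] at * <;> omega

theorem perm_apply_inv_self {n : ℕ} (τ : Equiv.Perm (Fin n)) (x : Fin n) : τ (τ⁻¹ x) = x :=
  Equiv.apply_symm_apply τ x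

theorem perm_inv_apply_self {n : ℕ} (τ : Equiv.Perm (Fin n)) (x : Fin n) : τ⁻¹ (τ x) = x :=
  Equiv.symm_apply_apply τ x

theorem sgnc_swap_mul {n : ℕ} (a b : Fin n) (hab : (a : ℕ) + 1 = (b : ℕ))
    (τ : Equiv.Perm (Fin n)) :
    sgnc n (Equiv.swap a b * τ) = - sgnc n τ := by
  have hne : a ≠ b := by
    intro h; rw [h] at hab; omega
  have hab' : a < b := by rw [Fin.lt_def]; omega
  have huv : τ⁻¹ a ≠ τ⁻¹ b := fun h => hne (by
    have := congrArg τ h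
    rwa [perm_apply_inv_self, perm_apply_inv_self] at this)
  obtain ⟨P, hPlt, hPc⟩ : ∃ P : Fin n × Fin n, P.1 < P.2 ∧
      ((τ P.1 = a ∧ τ P.2 = b) ∨ (τ P.1 = b ∧ τ P.2 = a)) := by
    rcases huv.lt_or_gt with h | h
    · exact ⟨(τ⁻¹ a, τ⁻¹ b), h, Or.inl ⟨perm_apply_inv_self τ a, perm_apply_inv_self τ b⟩⟩
    · exact ⟨(τ⁻¹ b, τ⁻¹ a), h, Or.inr ⟨perm_apply_inv_self τ b, perm_apply_inv_self τ a⟩⟩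
  have key : ∀ p : Fin n × Fin n,
      (if p.1 < p.2 ∧ (Equiv.swap a b * τ) p.2 < (Equiv.swap a b * τ) p.1 then (-1 : ℤˣ) else 1)
      = (if p.1 < p.2 ∧ τ p.2 < τ p.1 then (-1 : ℤˣ) else 1) * (if p = P then -1 else 1) := by
    intro p
    by_cases h12 : p.1 < p.2
    · by_cases hp : p = P
      · subst hp
        rcases hPc with ⟨hc1, hc2⟩ | ⟨hc1, hc2⟩
        · have hA : (Equiv.swap a b * τ) p.2 < (Equiv.swap a b * τ) p.1 := by
            rw [Equiv.Perm.mul_apply, Equiv.Perm.mul_apply, hc1, hc2,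
              Equiv.swap_apply_left, Equiv.swap_apply_right]
            exact hab'
          have hB : ¬ τ p.2 < τ p.1 := by
            rw [hc1, hc2]; exact not_lt.mpr hab'.le
          rw [if_pos ⟨hPlt, hA⟩, if_neg (fun h => hB h.2), if_pos rfl, one_mul]
        · have hA : ¬ (Equiv.swap a b * τ) p.2 < (Equiv.swap a b * τ) p.1 := by
            rw [Equiv.Perm.mul_apply, Equiv.Perm.mul_apply, hc1, hc2,
              Equiv.swap_apply_left, Equiv.swap_apply_right]
            exact not_lt.mpr hab'.le
          have hB : τ p.2 < τ p.1 := by rw [hc1, hc2]; exact hab'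
          rw [if_neg (fun h => hA h.2), if_pos ⟨hPlt, hB⟩, if_pos rfl]
          norm_num
      · have hCn1 : ¬(τ p.1 = a ∧ τ p.2 = b) := by
          rintro ⟨e1, e2⟩
          apply hp
          have hu : p.1 = τ⁻¹ a := by rw [← e1, perm_inv_apply_self]
          have hv : p.2 = τ⁻¹ b := by rw [← e2, perm_inv_apply_self]
          rcases hPc with ⟨f1, f2⟩ | ⟨f1, f2⟩
          · have hu' : P.1 = τ⁻¹ a := by rw [← f1, perm_inv_apply_self]
            have hv' : P.2 = τ⁻¹ b := by rw [← f2, perm_inv_apply_self]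
            exact Prod.ext (hu.trans hu'.symm) (hv.trans hv'.symm)
          · exfalso
            have hu' : P.1 = τ⁻¹ b := by rw [← f1, perm_inv_apply_self]
            have hv' : P.2 = τ⁻¹ a := by rw [← f2, perm_inv_apply_self]
            rw [hu, hv] at h12
            rw [hu', hv'] at hPlt
            exact absurd hPlt h12.asymm
        have hCn2 : ¬(τ p.1 = b ∧ τ p.2 = a) := by
          rintro ⟨e1, e2⟩
          apply hp
          have hu : p.1 = τ⁻¹ b := by rw [← e1, perm_inv_apply_self]
          have hv : p.2 = τ⁻¹ a := by rw [← e2, perm_inv_apply_self]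
          rcases hPc with ⟨f1, f2⟩ | ⟨f1, f2⟩
          · exfalso
            have hu' : P.1 = τ⁻¹ a := by rw [← f1, perm_inv_apply_self]
            have hv' : P.2 = τ⁻¹ b := by rw [← f2, perm_inv_apply_self]
            rw [hu, hv] at h12
            rw [hu', hv'] at hPlt
            exact absurd hPlt h12.asymm
          · have hu' : P.1 = τ⁻¹ b := by rw [← f1, perm_inv_apply_self]
            have hv' : P.2 = τ⁻¹ a := by rw [← f2, perm_inv_apply_self]
            exact Prod.ext (hu.trans hu'.symm) (hv.trans hv'.symm)
        have hiff : ((Equiv.swap a b * τ) p.2 < (Equiv.swap a b * τ) p.1 ↔ τ p.2 < τ p.1) := by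
          rw [Equiv.Perm.mul_apply, Equiv.Perm.mul_apply]
          exact swap_lt_iff a b (τ p.2) (τ p.1) hab
            (fun h => (Equiv.injective τ).ne h12.ne' h)
            (fun h => hCn2 ⟨h.2, h.1⟩) (fun h => hCn1 ⟨h.2, h.1⟩)
        rw [if_neg hp, mul_one]
        by_cases ht : τ p.2 < τ p.1
        · rw [if_pos ⟨h12, hiff.mpr ht⟩, if_pos ⟨h12, ht⟩]
        · rw [if_neg (fun h => ht (hiff.mp h.2)), if_neg (fun h => ht h.2)]
    · have hpP : p ≠ P := fun h => h12 (h ▸ hPlt)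
      rw [if_neg (fun h => h12 h.1), if_neg (fun h => h12 h.1), if_neg hpP, mul_one]
  unfold sgnc
  rw [Finset.prod_congr rfl (fun p _ => key p), Finset.prod_mul_distrib,
    Finset.prod_ite_eq' Finset.univ P (fun _ => (-1 : ℤˣ)), if_pos (Finset.mem_univ P), mul_neg_one]

theorem invPerm_parity_swap_mul {n : ℕ} (a b : Fin n) (hab : (a : ℕ) + 1 = (b : ℕ))
    (τ : Equiv.Perm (Fin n)) :
    invPerm n (Equiv.swap a b * τ) % 2 ≠ invPerm n τ % 2 := by
  intro hEq
  have h1 := neg_one_pow_invPerm n (Equiv.swap a b * τ)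
  have h2 := neg_one_pow_invPerm n τ
  rw [sgnc_swap_mul a b hab τ, ← h2] at h1
  have pow2 : ∀ m : ℕ, ((-1 : ℤˣ)) ^ m = (-1) ^ (m % 2) := fun m => by
    conv_lhs => rw [← Nat.div_add_mod m 2]
    rw [pow_add, pow_mul]
    norm_num
  rw [pow2, pow2 (invPerm n τ), hEq] at h1
  rcases Nat.mod_two_eq_zero_or_one (invPerm n τ) with h | h <;> rw [h] at h1 <;>
    exact absurd h1 (by decide)


end ACP

namespace ACP

open SemidirectProduct Multiplicative

theorem fin_val_mk {n a : ℕ} (h : a < n) : ((⟨a, h⟩ : Fin n) : ℕ) = a := rfl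

theorem permAct_apply {r n : ℕ} (τ : Equiv.Perm (Fin n)) (z : Fin n → Multiplicative (ZMod r))
    (i : Fin n) : (permAct r n τ z) i = z (τ.symm i) := rfl

theorem gen_zero (r n : ℕ) :
    gen r n 0 = ⟨fun j => if (j : ℕ) = 0 then ofAdd (1 : ZMod r) else 1, 1⟩ := by
  unfold gen
  rw [dif_neg (by omega)]

theorem gen_pos (r n i : ℕ) (h1 : 0 < i) (h2 : i < n) :
    gen r n i = ⟨1, Equiv.swap ⟨i - 1, by omega⟩ ⟨i, h2⟩⟩ := by
  unfold gen
  rw [dif_pos ⟨h1, h2⟩]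

theorem gen_zero_pow (r n k : ℕ) :
    gen r n 0 ^ k = ⟨fun j => if (j : ℕ) = 0 then ofAdd ((k : ℕ) : ZMod r) else 1, 1⟩ := by
  induction k with
  | zero =>
    rw [pow_zero]
    apply SemidirectProduct.ext
    · funext j
      rw [one_left]
      simp
    · rw [one_right]
  | succ k ih =>
    rw [pow_succ, ih, gen_zero]
    apply SemidirectProduct.ext
    · rw [mul_left]
      funext j
      rw [Pi.mul_apply, permAct_apply]
      dsimp only
      by_cases hj : (j : ℕ) = 0
      · have hj' : (((1 : Equiv.Perm (Fin n)).symm j : Fin n) : ℕ) = 0 := hj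
        rw [if_pos hj, if_pos hj', if_pos hj, ← ofAdd_add]
        congr 1
        push_cast
        ring
      · have hj' : ¬ (((1 : Equiv.Perm (Fin n)).symm j : Fin n) : ℕ) = 0 := hj
        rw [if_neg hj, if_neg hj', if_neg hj, one_mul]
    · rw [mul_right, mul_one]

theorem agen_zero (r n : ℕ) :
    agen r n 0 = ⟨fun j => if (j : ℕ) = 0 then ofAdd ((2 : ℕ) : ZMod r) else 1, 1⟩ := by
  unfold agen
  rw [if_pos rfl]
  exact gen_zero_pow r n 2

theorem agen_pos (r n i : ℕ) (h1 : 0 < i) (h2 : i < n) :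
    agen r n i = ⟨fun j => if (j : ℕ) = 0 then ofAdd ((r / 2 : ℕ) : ZMod r) else 1,
      Equiv.swap ⟨i - 1, by omega⟩ ⟨i, h2⟩⟩ := by
  unfold agen
  rw [if_neg h1.ne', gen_zero_pow, gen_pos r n i h1 h2]
  apply SemidirectProduct.ext
  · rw [mul_left]
    funext j
    rw [Pi.mul_apply, permAct_apply]
    simp
  · rw [mul_right, one_mul]

theorem gen_pos_inv (R n i : ℕ) (h1 : 0 < i) (h2 : i < n) : (gen R n i)⁻¹ = gen R n i := by
  apply inv_eq_of_mul_eq_one_left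
  rw [gen_pos R n i h1 h2]
  apply SemidirectProduct.ext
  · rw [mul_left, one_left]
    funext j
    rw [Pi.mul_apply, permAct_apply]
    simp
  · rw [mul_right, one_right]
    exact Equiv.swap_mul_self _ _

theorem agen_one_inv (r n : ℕ) (hr : r % 4 = 2) (hn : 2 ≤ n) :
    (agen r n 1)⁻¹ = ⟨fun j => if (j : ℕ) = 1 then ofAdd ((r / 2 : ℕ) : ZMod r) else 1,
      Equiv.swap ⟨0, by omega⟩ ⟨1, by omega⟩⟩ := by
  apply inv_eq_of_mul_eq_one_left
  rw [agen_pos r n 1 one_pos (by omega)]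
  have hs : ∀ j : Fin n, ((Equiv.swap (⟨0, by omega⟩ : Fin n) ⟨1, by omega⟩) j : ℕ) = 0 ↔
      (j : ℕ) = 1 := by
    intro j
    rw [Equiv.swap_apply_def]
    split_ifs <;> simp_all [Fin.ext_iff, fin_val_mk]
  apply SemidirectProduct.ext
  · rw [mul_left, one_left]
    funext j
    rw [Pi.mul_apply, permAct_apply, Equiv.symm_swap]
    dsimp only
    by_cases hj : (j : ℕ) = 1
    · rw [if_pos hj, if_pos ((hs j).mpr hj), ← ofAdd_add, ← Nat.cast_add,
        show r / 2 + r / 2 = r by omega, ZMod.natCast_self, ofAdd_zero, Pi.one_apply]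
    · rw [if_neg hj, if_neg (fun h => hj ((hs j).mp h)), one_mul, Pi.one_apply]
  · rw [mul_right, one_right]
    exact Equiv.swap_mul_self _ _

theorem zval_eq (r n : ℕ) (π : G r n) (i : Fin n) : zval r n π i = (toAdd (π.left i)).val := rfl

theorem smap_left (r n : ℕ) (g : G (r / 2) n) (d : Fin n) :
    (smap r n g).left d = ofAdd (((2 * zval (r / 2) n g d +
      if (d : ℕ) = 0 ∧ invPerm n g.right % 2 = 1 then r / 2 else 0 : ℕ)) : ZMod r) := rfl

theorem smap_right (r n : ℕ) (g : G (r / 2) n) : (smap r n g).right = g.right := rfl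

theorem pmap_left (r n : ℕ) (π : G r n) (d : Fin n) :
    (pmap r n π).left d = ofAdd ((oslash r (zval r n π d) : ℕ) : ZMod (r / 2)) := rfl

theorem pmap_right (r n : ℕ) (π : G r n) : (pmap r n π).right = π.right := rfl

theorem zval_one {r n : ℕ} [NeZero r] (d : Fin n) : zval r n 1 d = 0 := by
  rw [zval_eq, one_left]
  show (toAdd (1 : Multiplicative (ZMod r))).val = 0
  rw [toAdd_one, ZMod.val_zero]

theorem smap_one (r n : ℕ) (hr : r % 4 = 2) : smap r n 1 = 1 := by
  haveI : NeZero (r / 2) := ⟨by omega⟩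
  apply SemidirectProduct.ext
  · funext d
    rw [smap_left, one_left]
    rw [zval_one, one_right, invPerm_one]
    norm_num
  · rw [smap_right]
    rfl

theorem oslash_zero (r : ℕ) : oslash r 0 = 0 := by
  unfold oslash
  simp

theorem pmap_one (r n : ℕ) (hr : r % 4 = 2) : pmap r n 1 = 1 := by
  haveI : NeZero r := ⟨by omega⟩
  apply SemidirectProduct.ext
  · funext d
    rw [pmap_left, zval_one, oslash_zero, Nat.cast_zero, ofAdd_zero, one_left]
    rfl
  · rfl

theorem pmap_mul (r n : ℕ) (hr : r % 4 = 2) (x y : G r n) :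
    pmap r n (x * y) = pmap r n x * pmap r n y := by
  haveI : NeZero r := ⟨by omega⟩
  apply SemidirectProduct.ext
  · rw [mul_left]
    funext d
    rw [Pi.mul_apply, permAct_apply, pmap_left, pmap_left, pmap_left, pmap_right]
    have hz : zval r n (x * y) d = (zval r n x d + zval r n y (x.right.symm d)) % r := by
      rw [zval_eq, mul_left, Pi.mul_apply, permAct_apply, toAdd_mul, ZMod.val_add,
        zval_eq, zval_eq]
    rw [hz, zmod_oslash_add hr, ofAdd_add]
  · rfl

noncomputable def pmapHom (r n : ℕ) (hr : r % 4 = 2) : G r n →* G (r / 2) n where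
  toFun := pmap r n
  map_one' := pmap_one r n hr
  map_mul' := pmap_mul r n hr

theorem pmap_smap (r n : ℕ) (hr : r % 4 = 2) (g : G (r / 2) n) :
    pmap r n (smap r n g) = g := by
  haveI : NeZero r := ⟨by omega⟩
  haveI : NeZero (r / 2) := ⟨by omega⟩
  apply SemidirectProduct.ext
  · funext d
    rw [pmap_left]
    set z := zval (r / 2) n g d with hz
    set E := if (d : ℕ) = 0 ∧ invPerm n g.right % 2 = 1 then r / 2 else 0 with hE
    have h1 : zval r n (smap r n g) d = (2 * z + E) % r := by
      rw [zval_eq, smap_left, toAdd_ofAdd, ZMod.val_natCast]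
    have hE0 : E % (r / 2) = 0 % (r / 2) := by
      rw [hE]; split
      · rw [Nat.mod_self, Nat.zero_mod]
      · rfl
    have h2 : oslash r ((2 * z + E) % r) ≡ z [MOD r / 2] := by
      apply Nat.ModEq.cancel_left_of_coprime (coprime_d hr)
      calc 2 * oslash r ((2 * z + E) % r) ≡ (2 * z + E) % r [MOD r / 2] := two_mul_oslash hr _
        _ ≡ 2 * z + E [MOD r / 2] := by
            have h : (2 * z + E) % r ≡ 2 * z + E [MOD 2 * (r / 2)] := by
              rw [show 2 * (r / 2) = r by omega]; exact Nat.mod_modEq _ r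
            exact h.of_mul_left 2
        _ ≡ 2 * z + 0 [MOD r / 2] := Nat.ModEq.add_left _ hE0
        _ = 2 * z := by ring
    rw [h1, (ZMod.natCast_eq_natCast_iff _ _ _).mpr h2, hz, zval_eq,
      ZMod.natCast_rightInverse _, ofAdd_toAdd]
  · rfl

end ACP

namespace ACP

open SemidirectProduct Multiplicative

theorem mul_left_apply {R n : ℕ} (x y : G R n) (d : Fin n) :
    (x * y).left d = x.left d * y.left (x.right.symm d) := by
  rw [mul_left, Pi.mul_apply, permAct_apply]

theorem val_one_zmod {R : ℕ} : (1 : ZMod R).val = 1 % R := by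
  rw [show (1 : ZMod R) = ((1 : ℕ) : ZMod R) by rw [Nat.cast_one], ZMod.val_natCast]

theorem modeq_lin (r a b : ℕ) (h : b = a ∨ b = a + r) : a ≡ b [MOD r] := by
  rcases h with rfl | rfl
  · rfl
  · show a % r = (a + r) % r
    rw [Nat.add_mod_right]

theorem step0_arith (r : ℕ) (hr : r % 4 = 2) (z E : ℕ) :
    2 * ((1 % (r / 2) + z) % (r / 2)) + E ≡ 2 + (2 * z + E) [MOD r] := by
  have h2r : 2 * (r / 2) = r := by omega
  have step1 : 2 * ((1 % (r / 2) + z) % (r / 2)) ≡ 2 * (1 % (r / 2) + z) [MOD r] := by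
    have h := (Nat.mod_modEq (1 % (r / 2) + z) (r / 2)).mul_left' 2
    rwa [h2r] at h
  have step2 : 2 * (1 % (r / 2)) ≡ 2 * 1 [MOD r] := by
    have h := (Nat.mod_modEq 1 (r / 2)).mul_left' 2
    rwa [h2r] at h
  calc 2 * ((1 % (r / 2) + z) % (r / 2)) + E ≡ 2 * (1 % (r / 2) + z) + E [MOD r] :=
        step1.add_right E
    _ = 2 * (1 % (r / 2)) + (2 * z + E) := by ring
    _ ≡ 2 * 1 + (2 * z + E) [MOD r] := step2.add_right _
    _ = 2 + (2 * z + E) := by ring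

theorem swap_val_eq_zero_iff {n : ℕ} (A B : Fin n) (hAB : (A : ℕ) + 1 = (B : ℕ))
    (h2 : 2 ≤ (B : ℕ)) (j : Fin n) :
    ((Equiv.swap A B) j : ℕ) = 0 ↔ (j : ℕ) = 0 := by
  rw [Equiv.swap_apply_def]
  split_ifs <;> simp_all [Fin.ext_iff] <;> omega

theorem swap01_val_eq_zero_iff {n : ℕ} (A B : Fin n) (hA : (A : ℕ) = 0) (hB : (B : ℕ) = 1)
    (j : Fin n) : ((Equiv.swap A B) j : ℕ) = 0 ↔ (j : ℕ) = 1 := by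
  rw [Equiv.swap_apply_def]
  split_ifs <;> simp_all [Fin.ext_iff] <;> omega

theorem agen_pos' (r n i : ℕ) (h1 : 0 < i) (h2 : i < n) (A B : Fin n)
    (hA : (A : ℕ) = i - 1) (hB : (B : ℕ) = i) :
    agen r n i = ⟨fun j => if (j : ℕ) = 0 then ofAdd ((r / 2 : ℕ) : ZMod r) else 1,
      Equiv.swap A B⟩ := by
  rw [agen_pos r n i h1 h2,
    show (⟨i - 1, by omega⟩ : Fin n) = A from Fin.ext (by rw [fin_val_mk, hA]),
    show (⟨i, h2⟩ : Fin n) = B from Fin.ext (by rw [fin_val_mk, hB])]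

theorem agen_one_inv' (r n : ℕ) (hr : r % 4 = 2) (hn : 2 ≤ n) (A B : Fin n)
    (hA : (A : ℕ) = 0) (hB : (B : ℕ) = 1) :
    (agen r n 1)⁻¹ = ⟨fun j => if (j : ℕ) = 1 then ofAdd ((r / 2 : ℕ) : ZMod r) else 1,
      Equiv.swap A B⟩ := by
  rw [agen_one_inv r n hr hn,
    show (⟨0, by omega⟩ : Fin n) = A from Fin.ext (by rw [fin_val_mk, hA]),
    show (⟨1, by omega⟩ : Fin n) = B from Fin.ext (by rw [fin_val_mk, hB])]

theorem step (r n : ℕ) (hn : 2 ≤ n) (hr : r % 4 = 2) (i : ℕ) (hi : i < n) (g : G (r / 2) n) :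
    ∃ a ∈ Aset r n, smap r n (gen (r / 2) n i * g) = a * smap r n g := by
  haveI : NeZero (r / 2) := ⟨by omega⟩
  have h1d : ∀ d : Fin n, (Equiv.symm (1 : Equiv.Perm (Fin n))) d = d := fun _ => rfl
  rcases Nat.eq_zero_or_pos i with rfl | hip
  · -- i = 0
    refine ⟨agen r n 0, Set.mem_union_left _ ⟨0, by omega, rfl⟩, ?_⟩
    have hright : (gen (r / 2) n 0 * g).right = g.right := by
      rw [mul_right, gen_zero]
      dsimp only
      rw [one_mul]
    have hz0 : ∀ d : Fin n, zval (r / 2) n (gen (r / 2) n 0 * g) d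
        = if (d : ℕ) = 0 then (1 % (r / 2) + zval (r / 2) n g d) % (r / 2)
          else zval (r / 2) n g d := by
      intro d
      rw [zval_eq, mul_left_apply, gen_zero]
      dsimp only
      rw [h1d d]
      by_cases hd : (d : ℕ) = 0
      · rw [if_pos hd, if_pos hd, toAdd_mul, toAdd_ofAdd, ZMod.val_add, val_one_zmod, zval_eq]
      · rw [if_neg hd, if_neg hd, one_mul, zval_eq]
    rw [agen_zero]
    apply SemidirectProduct.ext
    · funext d
      rw [mul_left_apply, smap_left r n (gen (r / 2) n 0 * g) d, hright]
      dsimp only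
      rw [h1d d, smap_left r n g d, hz0 d]
      by_cases hd : (d : ℕ) = 0
      · rw [if_pos hd, if_pos hd, ← ofAdd_add, ← Nat.cast_add]
        exact congrArg _ ((ZMod.natCast_eq_natCast_iff _ _ _).mpr (step0_arith r hr _ _))
      · rw [if_neg hd, if_neg hd, one_mul]
    · rw [smap_right, hright, mul_right, smap_right]
      dsimp only
      rw [one_mul]
  · -- i ≥ 1
    set A : Fin n := ⟨i - 1, by omega⟩ with hsA
    set B : Fin n := ⟨i, hi⟩ with hsB
    have hA : (A : ℕ) = i - 1 := rfl
    have hB : (B : ℕ) = i := rfl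
    have hright : (gen (r / 2) n i * g).right = Equiv.swap A B * g.right := by
      rw [mul_right, gen_pos (r / 2) n i hip hi]
    have hz : ∀ d : Fin n, zval (r / 2) n (gen (r / 2) n i * g) d
        = zval (r / 2) n g ((Equiv.swap A B) d) := by
      intro d
      rw [zval_eq, mul_left_apply, gen_pos (r / 2) n i hip hi]
      dsimp only
      rw [Pi.one_apply, one_mul, Equiv.symm_swap, zval_eq]
    have hflip : invPerm n (Equiv.swap A B * g.right) % 2 ≠ invPerm n g.right % 2 :=
      invPerm_parity_swap_mul A B (by rw [hA, hB]; omega) g.right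
    by_cases hpar : invPerm n g.right % 2 = 1
    · -- inv(g) odd
      have hpar' : ¬ invPerm n (Equiv.swap A B * g.right) % 2 = 1 := by omega
      by_cases hi1 : i = 1
      · -- i = 1
        refine ⟨(agen r n 1)⁻¹, Set.mem_union_right _ rfl, ?_⟩
        rw [show i = 1 from hi1] at hright hz ⊢
        rw [agen_one_inv' r n hr hn A B (by omega) (by omega)]
        apply SemidirectProduct.ext
        · funext d
          rw [mul_left_apply, smap_left r n (gen (r / 2) n 1 * g) d, hright]
          dsimp only
          rw [Equiv.symm_swap, smap_left r n g ((Equiv.swap A B) d), hz d]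
          rw [if_neg (show ¬((d : ℕ) = 0 ∧
              invPerm n (Equiv.swap A B * g.right) % 2 = 1) from fun hh => hpar' hh.2)]
          by_cases hd : (d : ℕ) = 1
          · rw [if_pos hd, if_pos (show ((Equiv.swap A B) d : ℕ) = 0 ∧
                invPerm n g.right % 2 = 1 from
                ⟨(swap01_val_eq_zero_iff A B (by omega) (by omega) d).mpr hd, hpar⟩),
              ← ofAdd_add, ← Nat.cast_add]
            exact congrArg _ ((ZMod.natCast_eq_natCast_iff _ _ _).mpr
              (modeq_lin r _ _ (by omega)))
          · rw [if_neg hd, if_neg (show ¬(((Equiv.swap A B) d : ℕ) = 0 ∧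
                invPerm n g.right % 2 = 1) from
                fun hh => hd ((swap01_val_eq_zero_iff A B (by omega) (by omega) d).mp hh.1)),
              one_mul]
        · rw [smap_right, hright, mul_right, smap_right]
      · -- i ≥ 2
        refine ⟨agen r n i, Set.mem_union_left _ ⟨i, by omega, rfl⟩, ?_⟩
        rw [agen_pos' r n i hip hi A B hA hB]
        apply SemidirectProduct.ext
        · funext d
          rw [mul_left_apply, smap_left r n (gen (r / 2) n i * g) d, hright]
          dsimp only
          rw [Equiv.symm_swap, smap_left r n g ((Equiv.swap A B) d), hz d]
          rw [if_neg (show ¬((d : ℕ) = 0 ∧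
              invPerm n (Equiv.swap A B * g.right) % 2 = 1) from fun hh => hpar' hh.2)]
          by_cases hd : (d : ℕ) = 0
          · rw [if_pos hd, if_pos (show ((Equiv.swap A B) d : ℕ) = 0 ∧
                invPerm n g.right % 2 = 1 from
                ⟨(swap_val_eq_zero_iff A B (by omega) (by omega) d).mpr hd, hpar⟩),
              ← ofAdd_add, ← Nat.cast_add]
            exact congrArg _ ((ZMod.natCast_eq_natCast_iff _ _ _).mpr
              (modeq_lin r _ _ (by omega)))
          · rw [if_neg hd, if_neg (show ¬(((Equiv.swap A B) d : ℕ) = 0 ∧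
                invPerm n g.right % 2 = 1) from
                fun hh => hd ((swap_val_eq_zero_iff A B (by omega) (by omega) d).mp hh.1)),
              one_mul]
        · rw [smap_right, hright, mul_right, smap_right]
    · -- inv(g) even
      have hpar2 : invPerm n (Equiv.swap A B * g.right) % 2 = 1 := by omega
      refine ⟨agen r n i, Set.mem_union_left _ ⟨i, by omega, rfl⟩, ?_⟩
      rw [agen_pos' r n i hip hi A B hA hB]
      apply SemidirectProduct.ext
      · funext d
        rw [mul_left_apply, smap_left r n (gen (r / 2) n i * g) d, hright]
        dsimp only
        rw [Equiv.symm_swap, smap_left r n g ((Equiv.swap A B) d), hz d]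
        rw [if_neg (show ¬(((Equiv.swap A B) d : ℕ) = 0 ∧
            invPerm n g.right % 2 = 1) from fun hh => hpar hh.2)]
        by_cases hd : (d : ℕ) = 0
        · rw [if_pos (show (d : ℕ) = 0 ∧
              invPerm n (Equiv.swap A B * g.right) % 2 = 1 from ⟨hd, hpar2⟩),
            if_pos hd, ← ofAdd_add, ← Nat.cast_add]
          exact congrArg _ ((ZMod.natCast_eq_natCast_iff _ _ _).mpr
            (modeq_lin r _ _ (by omega)))
        · rw [if_neg (show ¬((d : ℕ) = 0 ∧
              invPerm n (Equiv.swap A B * g.right) % 2 = 1) from fun hh => hd hh.1),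
            if_neg hd, one_mul]
      · rw [smap_right, hright, mul_right, smap_right]

end ACP

namespace ACP

open SemidirectProduct Multiplicative

theorem pmap_agen_zero (r n : ℕ) (hr : r % 4 = 2) (hn : 0 < n) :
    pmap r n (agen r n 0) = gen (r / 2) n 0 := by
  haveI : NeZero r := ⟨by omega⟩
  have hv : ∀ d : Fin n, zval r n (agen r n 0) d = if (d : ℕ) = 0 then 2 % r else 0 := by
    intro d
    rw [zval_eq, agen_zero]
    dsimp only
    by_cases hd : (d : ℕ) = 0
    · rw [if_pos hd, if_pos hd, toAdd_ofAdd, ZMod.val_natCast]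
    · rw [if_neg hd, if_neg hd, toAdd_one, ZMod.val_zero]
  apply SemidirectProduct.ext
  · funext d
    rw [pmap_left, hv d, gen_zero]
    dsimp only
    by_cases hd : (d : ℕ) = 0
    · rw [if_pos hd, if_pos hd]
      have h1 : ((oslash r (2 % r) : ℕ) : ZMod (r / 2)) = ((oslash r 2 : ℕ) : ZMod (r / 2)) :=
        (ZMod.natCast_eq_natCast_iff _ _ _).mpr (oslash_mod hr 2)
      have h2 : oslash r 2 = 1 % (r / 2) := by
        unfold oslash
        norm_num
      rw [h1, h2, ZMod.natCast_mod, Nat.cast_one]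
    · rw [if_neg hd, if_neg hd, oslash_zero, Nat.cast_zero, ofAdd_zero]
  · rw [pmap_right, agen_zero, gen_zero]

theorem oslash_half (r : ℕ) (hr : r % 4 = 2) : oslash r (r / 2) = 0 := by
  unfold oslash
  rw [if_neg (by omega)]
  rw [show r / 2 + r / 2 = 2 * (r / 2) by ring, Nat.mul_div_cancel_left _ (by norm_num),
    Nat.mod_self]

theorem pmap_agen_pos (r n i : ℕ) (hr : r % 4 = 2) (h1 : 0 < i) (h2 : i < n) :
    pmap r n (agen r n i) = gen (r / 2) n i := by
  haveI : NeZero r := ⟨by omega⟩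
  have hv : ∀ d : Fin n, zval r n (agen r n i) d = if (d : ℕ) = 0 then r / 2 else 0 := by
    intro d
    rw [zval_eq, agen_pos r n i h1 h2]
    dsimp only
    by_cases hd : (d : ℕ) = 0
    · rw [if_pos hd, if_pos hd, toAdd_ofAdd, ZMod.val_natCast, Nat.mod_eq_of_lt (by omega)]
    · rw [if_neg hd, if_neg hd, toAdd_one, ZMod.val_zero]
  apply SemidirectProduct.ext
  · funext d
    rw [pmap_left, hv d, gen_pos (r / 2) n i h1 h2]
    dsimp only
    rw [Pi.one_apply]
    by_cases hd : (d : ℕ) = 0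
    · rw [if_pos hd, oslash_half r hr, Nat.cast_zero, ofAdd_zero]
    · rw [if_neg hd, oslash_zero, Nat.cast_zero, ofAdd_zero]
  · rw [pmap_right, agen_pos r n i h1 h2, gen_pos (r / 2) n i h1 h2]

theorem pmap_agen_one_inv (r n : ℕ) (hr : r % 4 = 2) (hn : 2 ≤ n) :
    pmap r n ((agen r n 1)⁻¹) = gen (r / 2) n 1 := by
  have h0 : pmap r n ((agen r n 1)⁻¹) = (pmapHom r n hr) ((agen r n 1)⁻¹) := rfl
  rw [h0, map_inv, show (pmapHom r n hr) (agen r n 1) = gen (r / 2) n 1 from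
    pmap_agen_pos r n 1 hr one_pos (by omega), gen_pos_inv (r / 2) n 1 one_pos (by omega)]

theorem exists_word_Sset (R n : ℕ) (hR : 0 < R) (hn : 0 < n) (g : G R n) :
    ∃ w : List (G R n), (∀ x ∈ w, x ∈ Sset R n) ∧ w.prod = g := by
  haveI : NeZero R := ⟨hR.ne'⟩
  suffices h : g ∈ Submonoid.closure (Sset R n) by
    obtain ⟨l, hl, hp⟩ := Submonoid.exists_list_of_mem_closure h
    exact ⟨l, hl, hp⟩
  have hgen : ∀ i, i < n → gen R n i ∈ Submonoid.closure (Sset R n) :=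
    fun i h => Submonoid.subset_closure ⟨i, h, rfl⟩
  have hinv : ∀ x ∈ Submonoid.closure (Sset R n), x⁻¹ ∈ Submonoid.closure (Sset R n) := by
    intro x hx
    induction hx using Submonoid.closure_induction with
    | mem y hy =>
      obtain ⟨i, hilt, rfl⟩ := hy
      rcases Nat.eq_zero_or_pos i with rfl | hip
      · have hpow : gen R n 0 ^ (R - 1) * gen R n 0 = 1 := by
          rw [← pow_succ, show R - 1 + 1 = R by omega, gen_zero_pow]
          apply SemidirectProduct.ext
          · funext j
            dsimp only
            rw [ZMod.natCast_self, ofAdd_zero, one_left]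
            simp
          · rfl
        rw [inv_eq_of_mul_eq_one_left hpow]
        exact pow_mem (hgen 0 hn) _
      · rw [gen_pos_inv R n i hip hilt]
        exact hgen i hilt
    | one =>
      rw [inv_one]
      exact one_mem _
    | mul a b ha hb iha ihb =>
      rw [mul_inv_rev]
      exact mul_mem ihb iha
  have hinr : ∀ τ : Equiv.Perm (Fin n), (inr τ : G R n) ∈ Submonoid.closure (Sset R n) := by
    obtain ⟨m, rfl⟩ : ∃ m, n = m + 1 := ⟨n - 1, by omega⟩
    intro τ
    have hτ : τ ∈ Submonoid.closure
        (Set.range fun i : Fin m ↦ Equiv.swap i.castSucc i.succ) := by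
      rw [Equiv.Perm.mclosure_swap_castSucc_succ]
      exact Submonoid.mem_top τ
    induction hτ using Submonoid.closure_induction with
    | mem y hy =>
      obtain ⟨j, hj⟩ := hy
      have hkey : (inr (Equiv.swap j.castSucc j.succ) : G R (m + 1))
          = gen R (m + 1) ((j : ℕ) + 1) := by
        rw [gen_pos R (m + 1) ((j : ℕ) + 1) (Nat.succ_pos _) (by omega),
          show (⟨(j : ℕ) + 1 - 1, by omega⟩ : Fin (m + 1)) = j.castSucc from
            Fin.ext (by rw [fin_val_mk, Fin.coe_castSucc]; omega),
          show (⟨(j : ℕ) + 1, by omega⟩ : Fin (m + 1)) = j.succ from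
            Fin.ext (by rw [fin_val_mk, Fin.val_succ])]
        apply SemidirectProduct.ext
        · rw [left_inr]
        · rw [right_inr]
      rw [← hj]
      show (inr (Equiv.swap j.castSucc j.succ) : G R (m + 1)) ∈ _
      rw [hkey]
      exact hgen _ (by omega)
    | one =>
      rw [map_one]
      exact one_mem _
    | mul a b ha hb iha ihb =>
      rw [map_mul]
      exact mul_mem iha ihb
  have hcol : ∀ (j : Fin n) (c : Multiplicative (ZMod R)),
      (inl (Pi.mulSingle j c) : G R n) ∈ Submonoid.closure (Sset R n) := by
    have h0 : ∀ c : Multiplicative (ZMod R),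
        (inl (Pi.mulSingle (⟨0, hn⟩ : Fin n) c) : G R n) ∈ Submonoid.closure (Sset R n) := by
      intro c
      have hkey : (inl (Pi.mulSingle (⟨0, hn⟩ : Fin n) c) : G R n)
          = gen R n 0 ^ (toAdd c).val := by
        rw [gen_zero_pow]
        apply SemidirectProduct.ext
        · rw [left_inl]
          funext d
          rw [Pi.mulSingle_apply]
          dsimp only
          by_cases hd : (d : ℕ) = 0
          · rw [if_pos (show d = (⟨0, hn⟩ : Fin n) from Fin.ext hd), if_pos hd,
              ZMod.natCast_rightInverse (toAdd c), ofAdd_toAdd]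
          · rw [if_neg (fun h => hd (by rw [h, fin_val_mk])), if_neg hd]
        · rw [right_inl]
      rw [hkey]
      exact pow_mem (hgen 0 hn) _
    intro j c
    have hconj : (inl (Pi.mulSingle j c) : G R n)
        = inr (Equiv.swap (⟨0, hn⟩ : Fin n) j) * inl (Pi.mulSingle (⟨0, hn⟩ : Fin n) c) *
          inr (Equiv.swap (⟨0, hn⟩ : Fin n) j)⁻¹ := by
      rw [← inl_aut]
      congr 1
      funext d
      rw [permAct_apply, Pi.mulSingle_apply, Pi.mulSingle_apply, Equiv.symm_swap]
      have hiff : (Equiv.swap (⟨0, hn⟩ : Fin n) j) d = (⟨0, hn⟩ : Fin n) ↔ d = j := by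
        rw [Equiv.apply_eq_iff_eq_symm_apply, Equiv.symm_swap, Equiv.swap_apply_left]
      rw [if_congr hiff rfl rfl]
    rw [hconj]
    exact mul_mem (mul_mem (hinr _) (h0 c)) (hinr _)
  have hleft : (inl g.left : G R n) ∈ Submonoid.closure (Sset R n) := by
    have hrep : g.left = (List.ofFn fun j => Pi.mulSingle j (g.left j)).prod := by
      rw [List.prod_ofFn, Finset.univ_prod_mulSingle]
    rw [hrep, map_list_prod]
    apply Submonoid.list_prod_mem
    intro x hx
    obtain ⟨y, hy, rfl⟩ := List.mem_map.mp hx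
    obtain ⟨j, rfl⟩ := List.mem_ofFn.mp hy
    exact hcol j _
  have hfin := mul_mem hleft (hinr g.right)
  rwa [inl_left_mul_inr_right] at hfin

theorem wordLength_le {H : Type*} [Group H] (B : Set H) (w : List H)
    (h1 : ∀ x ∈ w, x ∈ B) : wordLength B w.prod ≤ w.length :=
  Nat.sInf_le ⟨w, h1, rfl, rfl⟩

theorem exists_min_word {H : Type*} [Group H] (B : Set H) (g : H)
    (h : ∃ w : List H, (∀ x ∈ w, x ∈ B) ∧ w.prod = g) :
    ∃ w : List H, (∀ x ∈ w, x ∈ B) ∧ w.prod = g ∧ w.length = wordLength B g := by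
  obtain ⟨w0, h1, h2⟩ := h
  have hne : {k | ∃ w : List H, (∀ x ∈ w, x ∈ B) ∧ w.prod = g ∧ w.length = k}.Nonempty :=
    ⟨w0.length, w0, h1, h2, rfl⟩
  obtain ⟨w, hw1, hw2, hw3⟩ := Nat.sInf_mem hne
  exact ⟨w, hw1, hw2, hw3⟩

theorem lift_word (r n : ℕ) (hn : 2 ≤ n) (hr : r % 4 = 2) :
    ∀ w : List (G (r / 2) n), (∀ x ∈ w, x ∈ Sset (r / 2) n) →
      ∃ w' : List (G r n), (∀ x ∈ w', x ∈ Aset r n) ∧ w'.prod = smap r n w.prod ∧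
        w'.length = w.length := by
  intro w
  induction w with
  | nil =>
    intro _
    exact ⟨[], by simp, by rw [List.prod_nil, List.prod_nil, smap_one r n hr], rfl⟩
  | cons t w ih =>
    intro h
    obtain ⟨w', h1, h2, h3⟩ := ih (fun x hx => h x (List.mem_cons_of_mem _ hx))
    obtain ⟨i, hilt, hti⟩ := h t List.mem_cons_self
    obtain ⟨a, ha, hstep⟩ := step r n hn hr i hilt w.prod
    refine ⟨a :: w', ?_, ?_, ?_⟩
    · intro x hx
      rcases List.mem_cons.mp hx with rfl | hx'
      · exact ha
      · exact h1 x hx'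
    · rw [List.prod_cons, List.prod_cons, h2, hti, hstep]
    · rw [List.length_cons, List.length_cons, h3]

end ACP

/-- `ℓ_𝒜(π₀) = ℓ_G(p(π))` where `π₀ = s(p(π))` and `ℓ_G` is word length in
`G_{r/2,n}` with respect to its Coxeter-like generators. -/
theorem length_section_eq (r n : ℕ) (hn : 2 ≤ n) (hr : r % 4 = 2)
    (π : ACP.G r n) (hπ : π ∈ ACP.Arn r n (by omega)) :
    ACP.wordLength (ACP.Aset r n) (ACP.smap r n (ACP.pmap r n π)) =
      ACP.wordLength (ACP.Sset (r / 2) n) (ACP.pmap r n π) := by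
  classical
  haveI : NeZero (r / 2) := ⟨by omega⟩
  set g : ACP.G (r / 2) n := ACP.pmap r n π with hg
  obtain ⟨w0, hw0a, hw0b⟩ := ACP.exists_word_Sset (r / 2) n (by omega) (by omega) g
  obtain ⟨w, hw1, hw2, hw3⟩ := ACP.exists_min_word (ACP.Sset (r / 2) n) g ⟨w0, hw0a, hw0b⟩
  obtain ⟨w', hv1, hv2, hv3⟩ := ACP.lift_word r n hn hr w hw1
  rw [hw2] at hv2
  have le1 : ACP.wordLength (ACP.Aset r n) (ACP.smap r n g)
      ≤ ACP.wordLength (ACP.Sset (r / 2) n) g := by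
    have h := ACP.wordLength_le (ACP.Aset r n) w' hv1
    rw [hv2] at h
    omega
  have le2 : ACP.wordLength (ACP.Sset (r / 2) n) g
      ≤ ACP.wordLength (ACP.Aset r n) (ACP.smap r n g) := by
    obtain ⟨v, hva, hvb, hvc⟩ := ACP.exists_min_word (ACP.Aset r n) (ACP.smap r n g)
      ⟨w', hv1, hv2⟩
    have hmem : ∀ x ∈ v.map (ACP.pmap r n), x ∈ ACP.Sset (r / 2) n := by
      intro x hx
      obtain ⟨y, hy, rfl⟩ := List.mem_map.mp hx
      rcases hva y hy with ⟨j, hj, rfl⟩ | h1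
      · rcases Nat.eq_zero_or_pos j with rfl | hjp
        · exact ⟨0, by omega, ACP.pmap_agen_zero r n hr (by omega)⟩
        · exact ⟨j, by omega, ACP.pmap_agen_pos r n j hr hjp (by omega)⟩
      · rw [Set.mem_singleton_iff] at h1
        subst h1
        exact ⟨1, by omega, ACP.pmap_agen_one_inv r n hr hn⟩
    have hprod : (v.map (ACP.pmap r n)).prod = g := by
      have h2 : (v.map (ACP.pmapHom r n hr)).prod = (ACP.pmapHom r n hr) v.prod :=
        (map_list_prod _ v).symm
      rw [show v.map (ACP.pmap r n) = v.map (ACP.pmapHom r n hr) from rfl, h2, hvb]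
      exact ACP.pmap_smap r n hr g
    have h := ACP.wordLength_le (ACP.Sset (r / 2) n) (v.map (ACP.pmap r n)) hmem
    rw [hprod, List.length_map] at h
    omega
  exact le_antisymm le1 le2
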